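/- arXiv:1004.2795 — 4 statements merged into one kernel-verified Lean document; each statement's English description precedes it below -/
import Mathlib

section
/- Let q be a prime power, let l, n be positive integers, and let C be a linear code of length l+n over F_q. Suppose v_1,...,v_l ∈ C^⊥ are such that for each j the vector formed by the first l coordinates of v_j equals the j-th standard unit vector e_j of F_q^l, and let m = |(⋃_{j=1}^l supp(v_j)) \ {1,...,l}|. Let d_l^⊥ denote the l-th generalized Hamming weight of C^⊥, i.e. the minimum of |supp(D)| over all l-dimensional F_q-subspaces D of C^⊥, where supp(D) = ⋃_{x∈D} supp(x). Then m ≥ d_l^⊥ − l. -/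
/-- The dual code of a linear code `C ⊆ F_q^N` under the standard inner product. -/
def dualCode {F : Type*} [Field F] {N : ℕ} (C : Submodule F (Fin N → F)) :
    Submodule F (Fin N → F) where
  carrier := {v | ∀ c ∈ C, ∑ h, v h * c h = 0}
  add_mem' := by
    intro a b ha hb c hc
    simp only [Set.mem_setOf_eq] at *
    simp [Pi.add_apply, add_mul, Finset.sum_add_distrib, ha c hc, hb c hc]
  zero_mem' := by
    intro c hc
    simp
  smul_mem' := by
    intro r a ha c hc
    simp only [Set.mem_setOf_eq] at *
    simp [Pi.smul_apply, smul_eq_mul, mul_assoc, ← Finset.mul_sum, ha c hc]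

/-- The support of a subspace `D ⊆ F_q^N`: the set of coordinates where some element of `D`
is nonzero. -/
def suppSpace {F : Type*} [Field F] {N : ℕ} (D : Submodule F (Fin N → F)) : Set (Fin N) :=
  {h | ∃ x ∈ D, x h ≠ 0}

/-- The `l`-th generalized Hamming weight of a linear code `D`: the minimum support size of an
`l`-dimensional subcode of `D`. -/
noncomputable def genHammingWeight {F : Type*} [Field F] {N : ℕ} (l : ℕ)
    (D : Submodule F (Fin N → F)) : ℕ :=
  sInf {w | ∃ E : Submodule F (Fin N → F),
    E ≤ D ∧ Module.finrank F E = l ∧ w = (suppSpace E).ncard}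

/-- **Corollary 3**: if `v_1, …, v_l ∈ C^⊥` have the `j`-th standard unit vector of `F_q^l`
as their first `l` coordinates, and `m` is the number of coordinates beyond the first `l` on
which some `v_j` is nonzero, then `m ≥ d_l^⊥ − l`, where `d_l^⊥` is the `l`-th generalized
Hamming weight of `C^⊥` (stated in the equivalent form `d_l^⊥ ≤ m + l`). -/
theorem access_group_ge_genHammingWeight
    (F : Type*) [Field F] [Fintype F]
    (l n : ℕ) (hl : 0 < l) (hn : 0 < n)
    (C : Submodule F (Fin (l + n) → F))
    (v : Fin l → Fin (l + n) → F)
    (hv : ∀ j, v j ∈ dualCode C)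
    (hunit : ∀ j j' : Fin l, v j (Fin.castAdd n j') = if j' = j then 1 else 0)
    (m : ℕ)
    (hm : m = ((⋃ j, {h | v j h ≠ 0}) \ {h : Fin (l + n) | (h : ℕ) < l}).ncard) :
    genHammingWeight l (dualCode C) ≤ m + l := by
  classical
  -- linear independence of v
  have hind : LinearIndependent F v := by
    rw [Fintype.linearIndependent_iff]
    intro c hc j
    have := congrFun hc (Fin.castAdd n j)
    simpa [Finset.sum_apply, hunit, Finset.sum_ite_eq'] using this
  set E : Submodule F (Fin (l + n) → F) := Submodule.span F (Set.range v) with hE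
  have hEle : E ≤ dualCode C := by
    rw [hE, Submodule.span_le]
    rintro _ ⟨j, rfl⟩
    exact hv j
  have hrank : Module.finrank F E = l := by
    rw [hE, finrank_span_eq_card hind, Fintype.card_fin]
  set U : Set (Fin (l + n)) := ⋃ j, {h | v j h ≠ 0} with hU
  set L : Set (Fin (l + n)) := {h : Fin (l + n) | (h : ℕ) < l} with hL
  have hsupp : suppSpace E ⊆ U := by
    intro h hh
    obtain ⟨x, hx, hxh⟩ := hh
    revert hxh
    refine Submodule.span_induction (p := fun x _ => x h ≠ 0 → h ∈ U) ?_ ?_ ?_ ?_ hx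
    · rintro _ ⟨j, rfl⟩ hne
      exact Set.mem_iUnion.mpr ⟨j, hne⟩
    · simp
    · intro a b _ _ ha hb hab
      by_cases h1 : a h = 0
      · exact hb (by simpa [h1] using hab)
      · exact ha h1
    · intro r a _ ha hra
      exact ha fun h0 => hra (by simp [h0])
  have hLcard : L.ncard = l := by
    have : L = Set.range (Fin.castAdd n : Fin l → Fin (l + n)) := by
      ext h
      constructor
      · intro hh
        exact ⟨⟨(h : ℕ), hh⟩, by ext; simp⟩
      · rintro ⟨j, rfl⟩
        exact j.isLt
    rw [this, Set.ncard_eq_toFinset_card', Set.toFinset_range,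
      Finset.card_image_of_injective _ (Fin.castAdd_injective _ _), Finset.card_univ,
      Fintype.card_fin]
  have hUcard : U.ncard ≤ m + l := by
    have hsub : U ⊆ (U \ L) ∪ L := fun x hx => by
      by_cases hxL : x ∈ L
      · exact Or.inr hxL
      · exact Or.inl ⟨hx, hxL⟩
    calc U.ncard ≤ ((U \ L) ∪ L).ncard :=
          Set.ncard_le_ncard hsub (Set.toFinite _)
      _ ≤ (U \ L).ncard + L.ncard := Set.ncard_union_le _ _
      _ = m + l := by rw [hm, hLcard]
  have hmem : (suppSpace E).ncard ∈ {w | ∃ E' : Submodule F (Fin (l + n) → F),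
      E' ≤ dualCode C ∧ Module.finrank F E' = l ∧ w = (suppSpace E').ncard} :=
    ⟨E, hEle, hrank, rfl⟩
  calc genHammingWeight l (dualCode C) ≤ (suppSpace E).ncard := Nat.sInf_le hmem
    _ ≤ U.ncard := Set.ncard_le_ncard hsupp (Set.toFinite _)
    _ ≤ m + l := hUcard
end

section
/- Let l, n be positive integers and let D be a binary linear code of length l+n (a linear subspace of F_2^{l+n}) with minimum Hamming weight δ. Suppose v_1,...,v_l ∈ D are such that for each j the vector formed by the first l coordinates of v_j equals the j-th standard unit vector e_j of F_2^l, and let m = |(⋃_{j=1}^l supp(v_j)) \ {1,...,l}|. If there exists a nonzero codeword c ∈ D with supp(c) ⊆ (⋃_{j=1}^l supp(v_j)) \ {1,...,l}, then 2m ≥ 3δ − 2, i.e. m ≥ (3/2)δ − 1. -/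
/-- The minimum Hamming weight of a nonzero codeword of `D`. -/
noncomputable def minWeight {N : ℕ} (D : Submodule (ZMod 2) (Fin N → ZMod 2)) : ℕ :=
  sInf {w | ∃ c ∈ D, c ≠ 0 ∧ w = hammingNorm c}

lemma hammingNorm_eq_ncard {N : ℕ} (x : Fin N → ZMod 2) :
    hammingNorm x = {h | x h ≠ 0}.ncard := by
  classical
  rw [Set.ncard_eq_toFinset_card']
  simp [hammingNorm, Set.toFinset_setOf]

lemma minWeight_le {N : ℕ} (D : Submodule (ZMod 2) (Fin N → ZMod 2))
    (c : Fin N → ZMod 2) (hc : c ∈ D) (hc0 : c ≠ 0) :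
    minWeight D ≤ hammingNorm c :=
  Nat.sInf_le ⟨c, hc, hc0, rfl⟩

/-- Key inequality in the proof of **Theorem 6**: let `D` be a binary code of length `l + n`
of minimum weight `δ`, let `v_1, …, v_l ∈ D` have the standard unit vectors of `F_2^l` as
their first `l` coordinates, and let `m` be the number of coordinates beyond the first `l`
on which some `v_j` is nonzero.  If some nonzero `c ∈ D` is supported inside these `m`
coordinates, then `m ≥ (3/2)δ − 1` (stated in the equivalent integer form `3δ ≤ 2m + 2`). -/
theorem nonunique_tuple_size_bound
    (l n : ℕ) (hl : 0 < l) (hn : 0 < n)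
    (D : Submodule (ZMod 2) (Fin (l + n) → ZMod 2))
    (δ : ℕ) (hδ : δ = minWeight D)
    (v : Fin l → Fin (l + n) → ZMod 2)
    (hv : ∀ j, v j ∈ D)
    (hunit : ∀ j j' : Fin l, v j (Fin.castAdd n j') = if j' = j then 1 else 0)
    (m : ℕ)
    (hm : m = ((⋃ j, {h | v j h ≠ 0}) \ {h : Fin (l + n) | (h : ℕ) < l}).ncard)
    (hc : ∃ c ∈ D, c ≠ 0 ∧
        {h | c h ≠ 0} ⊆ (⋃ j, {h | v j h ≠ 0}) \ {h : Fin (l + n) | (h : ℕ) < l}) :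
    3 * δ ≤ 2 * m + 2 := by
  classical
  obtain ⟨c, hcD, hc0, hsupp⟩ := hc
  obtain ⟨j⟩ : Nonempty (Fin l) := ⟨⟨0, hl⟩⟩
  set S : Set (Fin (l + n)) :=
    (⋃ j, {h | v j h ≠ 0}) \ {h : Fin (l + n) | (h : ℕ) < l} with hS
  set A : Set (Fin (l + n)) := {h | v j h ≠ 0} \ {h : Fin (l + n) | (h : ℕ) < l} with hA
  set B : Set (Fin (l + n)) := {h | c h ≠ 0} with hB
  have hAS : A ⊆ S := Set.diff_subset_diff_left (Set.subset_iUnion (fun j => {h | v j h ≠ 0}) j)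
  have hBS : B ⊆ S := hsupp
  have hcfirst : ∀ h : Fin (l + n), (h : ℕ) < l → c h = 0 := by
    intro h hh
    by_contra h0
    exact (hsupp h0).2 hh
  have hjl : ((Fin.castAdd n j : Fin (l + n)) : ℕ) < l := j.isLt
  have hjA : (Fin.castAdd n j) ∉ A := fun h => h.2 hjl
  have hvj1 : v j (Fin.castAdd n j) = 1 := by simpa using hunit j j
  -- characterization of support on first l coordinates
  have hfirst : ∀ h : Fin (l + n), (h : ℕ) < l → (v j h ≠ 0 ↔ h = Fin.castAdd n j) := by
    intro h hh
    have heq : Fin.castAdd n ⟨(h : ℕ), hh⟩ = h := by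
      apply Fin.ext; simp
    constructor
    · intro hne
      rw [← heq] at hne
      rw [hunit j ⟨(h : ℕ), hh⟩] at hne
      by_cases hji : (⟨(h : ℕ), hh⟩ : Fin l) = j
      · rw [← heq, hji]
      · simp [hji] at hne
    · intro he; rw [he, hvj1]; exact one_ne_zero
  -- supp (v j) = insert (castAdd n j) A
  have hsuppv : {h | v j h ≠ 0} = insert (Fin.castAdd n j) A := by
    ext h
    simp only [Set.mem_setOf_eq, Set.mem_insert_iff, hA, Set.mem_diff, Set.mem_setOf_eq]
    constructor
    · intro hh
      by_cases hl' : (h : ℕ) < l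
      · exact Or.inl ((hfirst h hl').1 hh)
      · exact Or.inr ⟨hh, hl'⟩
    · rintro (rfl | ⟨hh, _⟩)
      · rw [hvj1]; exact one_ne_zero
      · exact hh
  -- supp (v j + c) = insert (castAdd n j) (A ∆ B)
  have hzmod : ∀ x y : ZMod 2, x + y ≠ 0 ↔ ¬ ((x ≠ 0) ↔ (y ≠ 0)) := by decide
  have hsuppvc : {h | (v j + c) h ≠ 0} = insert (Fin.castAdd n j) (symmDiff A B) := by
    ext h
    simp only [Set.mem_setOf_eq, Set.mem_insert_iff, Pi.add_apply]
    by_cases hl' : (h : ℕ) < l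
    · have hch : c h = 0 := hcfirst h hl'
      have hAh : h ∉ A := fun hmem => hmem.2 hl'
      have hBh : h ∉ B := fun hmem => (hBS hmem).2 hl'
      have hsd : h ∉ symmDiff A B := by
        rw [Set.mem_symmDiff]
        rintro (⟨h1, _⟩ | ⟨h1, _⟩)
        exacts [hAh h1, hBh h1]
      rw [hch, add_zero, hfirst h hl']
      simp [hsd]
    · have hAh : h ∈ A ↔ v j h ≠ 0 := by
        simp [hA, hl', Set.mem_diff]
      have hne : h ≠ Fin.castAdd n j := by
        intro he; rw [he] at hl'; exact hl' hjl
      rw [hzmod]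
      simp only [hne, false_or, Set.mem_symmDiff]
      constructor
      · intro hh
        by_cases h1 : v j h ≠ 0
        · exact Or.inl ⟨hAh.mpr h1, fun h2 => hh ⟨fun _ => h2, fun _ => h1⟩⟩
        · have h2 : c h ≠ 0 := by
            intro h2
            exact hh ⟨fun hx => absurd hx h1, fun hx => absurd h2 hx⟩
          exact Or.inr ⟨h2, fun hAm => h1 (hAh.mp hAm)⟩
      · rintro (⟨h1, h2⟩ | ⟨h1, h2⟩) hiff
        · exact h2 (hiff.mp (hAh.mp h1))
        · exact h2 (hAh.mpr (hiff.mpr h1))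
  have hjsd : (Fin.castAdd n j) ∉ symmDiff A B := by
    rw [Set.mem_symmDiff]
    rintro (⟨h1, _⟩ | ⟨h1, _⟩)
    · exact hjA h1
    · exact (hBS h1).2 hjl
  -- the three weight lower bounds
  have hδc : δ ≤ B.ncard := by
    rw [hδ, ← hammingNorm_eq_ncard]
    exact minWeight_le D c hcD hc0
  have hvj0 : v j ≠ 0 := by
    intro h0
    rw [h0] at hvj1
    simp at hvj1
  have hδv : δ ≤ 1 + A.ncard := by
    have := minWeight_le D (v j) (hv j) hvj0
    rw [← hδ, hammingNorm_eq_ncard, hsuppv, Set.ncard_insert_of_notMem hjA] at this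
    omega
  have hvc0 : v j + c ≠ 0 := by
    intro h0
    have : (v j + c) (Fin.castAdd n j) = 0 := by rw [h0]; rfl
    rw [Pi.add_apply, hvj1, hcfirst _ hjl, add_zero] at this
    exact one_ne_zero this
  have hδvc : δ ≤ 1 + (symmDiff A B).ncard := by
    have := minWeight_le D (v j + c) (add_mem (hv j) hcD) hvc0
    rw [← hδ, hammingNorm_eq_ncard, hsuppvc, Set.ncard_insert_of_notMem hjsd] at this
    omega
  -- cardinality identities
  have h1 : (A ∪ B).ncard + (A ∩ B).ncard = A.ncard + B.ncard :=
    Set.ncard_union_add_ncard_inter A B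
  have h2 : (symmDiff A B).ncard + (A ∩ B).ncard = (A ∪ B).ncard := by
    have hun : symmDiff A B ∪ A ∩ B = A ∪ B := symmDiff_sup_inf A B
    rw [← hun]
    exact (Set.ncard_union_eq (disjoint_symmDiff_inf A B)).symm
  have h3 : (A ∪ B).ncard ≤ m := by
    rw [hm]
    exact Set.ncard_le_ncard (Set.union_subset hAS hBS)
  omega
end

section
/- Let l, n be positive integers and let D be a binary linear code of length l+n (a linear subspace of F_2^{l+n}) with minimum Hamming weight δ. Suppose (v_1,...,v_l) and (w_1,...,w_l) are two tuples of codewords of D such that for each j both the first l coordinates of v_j and the first l coordinates of w_j equal the j-th standard unit vector e_j of F_2^l, and such that (⋃_{j=1}^l supp(v_j)) \ {1,...,l} = (⋃_{j=1}^l supp(w_j)) \ {1,...,l} =: T with |T| = m. If 2m < 3δ − 2, then v_j = w_j for all j = 1,...,l. -/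
lemma zmod2_add_eq_zero (a b : ZMod 2) : a + b = 0 ↔ a = b := by revert a b; decide

lemma zmod2_ne (a b : ZMod 2) :
    (a ≠ b ↔ (a ≠ 0 ∨ b ≠ 0) ∧ ¬(a ≠ 0 ∧ b ≠ 0)) := by revert a b; decide

lemma support_split (l n : ℕ) (c : Fin (l + n) → ZMod 2) (j : Fin l)
    (hunit : ∀ j' : Fin l, c (Fin.castAdd n j') = if j' = j then 1 else 0) :
    hammingNorm c = 1 + (Finset.univ.filter (fun h => c h ≠ 0 ∧ l ≤ (h : ℕ))).card := by
  classical
  have key := Finset.card_filter_add_card_filter_not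
    (s := Finset.univ.filter (fun h => c h ≠ 0)) (p := fun h : Fin (l+n) => (h : ℕ) < l)
  have h1 : (Finset.univ.filter (fun h => c h ≠ 0)).filter (fun h : Fin (l+n) => (h : ℕ) < l)
      = {Fin.castAdd n j} := by
    ext h
    simp only [Finset.mem_filter, Finset.mem_univ, true_and, Finset.mem_singleton]
    constructor
    · rintro ⟨hne, hlt⟩
      have hh : h = Fin.castAdd n ⟨(h : ℕ), hlt⟩ := by
        apply Fin.ext; simp
      rw [hh, hunit] at hne
      by_cases hjj : (⟨(h : ℕ), hlt⟩ : Fin l) = j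
      · rw [hh, hjj]
      · simp [hjj] at hne
    · rintro rfl
      refine ⟨?_, ?_⟩
      · rw [hunit]; simp
      · simp
  have h2 : (Finset.univ.filter (fun h => c h ≠ 0)).filter (fun h : Fin (l+n) => ¬ (h : ℕ) < l)
      = Finset.univ.filter (fun h => c h ≠ 0 ∧ l ≤ (h : ℕ)) := by
    rw [Finset.filter_filter]
    congr 1
    ext h
    simp [Nat.not_lt]
  rw [h1, h2, Finset.card_singleton] at key
  have : hammingNorm c = (Finset.univ.filter (fun h => c h ≠ 0)).card := by
    simp [hammingNorm]
  omega

/-- Uniqueness step in the proof of **Theorem 6**: let `D` be a binary code of length `l + n`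
of minimum weight `δ`, and let `(v_1, …, v_l)` and `(w_1, …, w_l)` be tuples of codewords of
`D` whose first `l` coordinates form the standard unit vectors of `F_2^l` and which have the
same union of supports `T` outside the first `l` coordinates, with `|T| = m`.
If `m < (3/2)δ − 1` (in the equivalent integer form `2m + 2 < 3δ`), then `v_j = w_j`
for all `j`. -/
theorem tuple_unique_of_small_access_group
    (l n : ℕ) (hl : 0 < l) (hn : 0 < n)
    (D : Submodule (ZMod 2) (Fin (l + n) → ZMod 2))
    (δ : ℕ) (hδ : δ = minWeight D)
    (v w : Fin l → Fin (l + n) → ZMod 2)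
    (hv : ∀ j, v j ∈ D) (hw : ∀ j, w j ∈ D)
    (hvunit : ∀ j j' : Fin l, v j (Fin.castAdd n j') = if j' = j then 1 else 0)
    (hwunit : ∀ j j' : Fin l, w j (Fin.castAdd n j') = if j' = j then 1 else 0)
    (T : Set (Fin (l + n)))
    (hvT : (⋃ j, {h | v j h ≠ 0}) \ {h : Fin (l + n) | (h : ℕ) < l} = T)
    (hwT : (⋃ j, {h | w j h ≠ 0}) \ {h : Fin (l + n) | (h : ℕ) < l} = T)
    (m : ℕ) (hm : T.ncard = m)
    (hsmall : 2 * m + 2 < 3 * δ) :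
    ∀ j, v j = w j := by
  classical
  intro j
  by_contra hne
  set d : Fin (l + n) → ZMod 2 := v j + w j with hd
  have hdD : d ∈ D := D.add_mem (hv j) (hw j)
  have hdne : d ≠ 0 := by
    intro h0
    apply hne
    funext h
    have := congrFun h0 h
    simpa [hd, zmod2_add_eq_zero] using this
  -- min weight bound
  have hmin : ∀ c : Fin (l+n) → ZMod 2, c ∈ D → c ≠ 0 → δ ≤ hammingNorm c := by
    intro c hc hcne
    rw [hδ]
    exact Nat.sInf_le ⟨c, hc, hcne, rfl⟩
  have hvne : v j ≠ 0 := by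
    intro h0
    have := congrFun h0 (Fin.castAdd n j)
    rw [hvunit] at this
    simp at this
  have hwne : w j ≠ 0 := by
    intro h0
    have := congrFun h0 (Fin.castAdd n j)
    rw [hwunit] at this
    simp at this
  set Tf : Finset (Fin (l + n)) := T.toFinset with hTf
  have hmTf : Tf.card = m := by rw [hTf, ← Set.ncard_eq_toFinset_card']; exact hm
  set A : Finset (Fin (l + n)) := Finset.univ.filter (fun h => v j h ≠ 0 ∧ l ≤ (h : ℕ)) with hA
  set B : Finset (Fin (l + n)) := Finset.univ.filter (fun h => w j h ≠ 0 ∧ l ≤ (h : ℕ)) with hB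
  have hAT : A ⊆ Tf := by
    intro h hh
    rw [hA, Finset.mem_filter] at hh
    rw [hTf, Set.mem_toFinset, ← hvT]
    exact ⟨Set.mem_iUnion.2 ⟨j, hh.2.1⟩, by simpa [Nat.not_lt] using hh.2.2⟩
  have hBT : B ⊆ Tf := by
    intro h hh
    rw [hB, Finset.mem_filter] at hh
    rw [hTf, Set.mem_toFinset, ← hwT]
    exact ⟨Set.mem_iUnion.2 ⟨j, hh.2.1⟩, by simpa [Nat.not_lt] using hh.2.2⟩
  have hva : hammingNorm (v j) = 1 + A.card := support_split l n (v j) j (hvunit j)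
  have hwb : hammingNorm (w j) = 1 + B.card := support_split l n (w j) j (hwunit j)
  -- support of d
  have hSd : Finset.univ.filter (fun h => d h ≠ 0) = (A ∪ B) \ (A ∩ B) := by
    ext h
    simp only [Finset.mem_filter, Finset.mem_univ, true_and, Finset.mem_sdiff,
      Finset.mem_union, Finset.mem_inter, hA, hB]
    by_cases hlt : (h : ℕ) < l
    · have hh : h = Fin.castAdd n ⟨(h : ℕ), hlt⟩ := by apply Fin.ext; simp
      have hvw : v j h = w j h := by rw [hh, hvunit, hwunit]
      constructor
      · intro hd0
        exfalso
        apply hd0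
        show v j h + w j h = 0
        rw [zmod2_add_eq_zero]; exact hvw
      · rintro ⟨hmem, -⟩
        rcases hmem with hm' | hm' <;> omega
    · have hd0 : (d h ≠ 0) ↔ v j h ≠ w j h := by
        rw [hd]; show (v j h + w j h ≠ 0) ↔ _
        rw [not_iff_not, zmod2_add_eq_zero]
      rw [hd0, zmod2_ne (v j h) (w j h)]
      have : l ≤ (h : ℕ) := Nat.not_lt.1 hlt
      constructor
      · rintro ⟨hor, hnand⟩
        refine ⟨?_, ?_⟩
        · rcases hor with h' | h'
          · exact Or.inl ⟨h', this⟩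
          · exact Or.inr ⟨h', this⟩
        · rintro ⟨⟨h1, -⟩, ⟨h2, -⟩⟩; exact hnand ⟨h1, h2⟩
      · rintro ⟨hor, hnand⟩
        refine ⟨?_, ?_⟩
        · rcases hor with ⟨h', -⟩ | ⟨h', -⟩
          · exact Or.inl h'
          · exact Or.inr h'
        · rintro ⟨h1, h2⟩; exact hnand ⟨⟨h1, this⟩, ⟨h2, this⟩⟩
  have hdnorm : hammingNorm d = ((A ∪ B) \ (A ∩ B)).card := by
    rw [← hSd]; simp [hammingNorm]
  have hcard : ((A ∪ B) \ (A ∩ B)).card = (A ∪ B).card - (A ∩ B).card :=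
    Finset.card_sdiff_of_subset (Finset.inter_subset_union)
  have hui : (A ∪ B).card + (A ∩ B).card = A.card + B.card :=
    Finset.card_union_add_card_inter A B
  have huT : (A ∪ B).card ≤ m := by
    rw [← hmTf]
    exact Finset.card_le_card (Finset.union_subset hAT hBT)
  have hinter : (A ∩ B).card ≤ (A ∪ B).card :=
    Finset.card_le_card Finset.inter_subset_union
  have h1 := hmin _ hdD hdne
  have h2 := hmin _ (hv j) hvne
  have h3 := hmin _ (hw j) hwne
  rw [hdnorm, hcard] at h1
  rw [hva] at h2
  rw [hwb] at h3
  omega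
end

section
/- Let C be a binary linear code of length n (a linear subspace of F_2^n) and suppose the automorphism group of C, i.e. the group of permutations σ of {1,...,n} such that permuting coordinates by σ maps C onto itself, acts 2-transitively on {1,...,n}. Fix nonnegative integers (i,j,k,l) with i+j+k+l = n and two distinct positions h_1 ≠ h_2 in {1,...,n}. Let A_{i,j,k,l} be the number of pairs (u,v) ∈ C × C with n_{00}(u,v)=i, n_{01}(u,v)=j, n_{10}(u,v)=k, n_{11}(u,v)=l, and let N'_{h_1,h_2} be the number of such pairs that additionally satisfy (u_{h_1}, v_{h_1}) = (0,1) and (u_{h_2}, v_{h_2}) = (1,0). Then n(n−1) · N'_{h_1,h_2} = j·k · A_{i,j,k,l}. -/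
/-- `nab a b u v` is the number of coordinate positions `h` with `(u h, v h) = (a, b)`. -/
def nab {n : ℕ} (a b : ZMod 2) (u v : Fin n → ZMod 2) : ℕ :=
  (Finset.univ.filter fun h => u h = a ∧ v h = b).card

/-- `σ` is an automorphism of the binary code `C`: permuting coordinates by `σ` maps `C`
onto itself. -/
def IsCodeAut {n : ℕ} (C : Submodule (ZMod 2) (Fin n → ZMod 2)) (σ : Equiv.Perm (Fin n)) :
    Prop :=
  ∀ c : Fin n → ZMod 2, c ∈ C ↔ (c ∘ σ) ∈ C

attribute [local instance] Classical.propDecidable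

lemma nab_comp {n : ℕ} (a b : ZMod 2) (u v : Fin n → ZMod 2) (σ : Equiv.Perm (Fin n)) :
    nab a b (u ∘ σ) (v ∘ σ) = nab a b u v := by
  unfold nab
  exact Finset.card_equiv σ (by simp [Function.comp])


/-- Counting content of **Proposition 7**: if the automorphism group of a binary code `C` of
length `n` acts 2-transitively on the coordinates, `A` counts the pairs of codewords with
pattern counts `(i, j, k, l)`, and `N'` counts those pairs that in addition have pattern `01`
at position `h₁` and pattern `10` at position `h₂` (with `h₁ ≠ h₂`), then
`n(n−1) · N' = j·k · A`. -/
theorem two_transitive_aut_pattern_count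
    (n : ℕ) (C : Submodule (ZMod 2) (Fin n → ZMod 2))
    (h2trans : ∀ h₁ h₂ h₁' h₂' : Fin n, h₁ ≠ h₂ → h₁' ≠ h₂' →
        ∃ σ : Equiv.Perm (Fin n), IsCodeAut C σ ∧ σ h₁ = h₁' ∧ σ h₂ = h₂')
    (i j k l : ℕ) (hsum : i + j + k + l = n)
    (h₁ h₂ : Fin n) (hne : h₁ ≠ h₂)
    (A N' : ℕ)
    (hA : A = {p : (Fin n → ZMod 2) × (Fin n → ZMod 2) | p.1 ∈ C ∧ p.2 ∈ C ∧
        nab 0 0 p.1 p.2 = i ∧ nab 0 1 p.1 p.2 = j ∧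
        nab 1 0 p.1 p.2 = k ∧ nab 1 1 p.1 p.2 = l}.ncard)
    (hN' : N' = {p : (Fin n → ZMod 2) × (Fin n → ZMod 2) | p.1 ∈ C ∧ p.2 ∈ C ∧
        nab 0 0 p.1 p.2 = i ∧ nab 0 1 p.1 p.2 = j ∧
        nab 1 0 p.1 p.2 = k ∧ nab 1 1 p.1 p.2 = l ∧
        p.1 h₁ = 0 ∧ p.2 h₁ = 1 ∧ p.1 h₂ = 1 ∧ p.2 h₂ = 0}.ncard) :
    n * (n - 1) * N' = j * k * A := by
  classical
  set P : (Fin n → ZMod 2) × (Fin n → ZMod 2) → Prop := fun p =>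
    p.1 ∈ C ∧ p.2 ∈ C ∧ nab 0 0 p.1 p.2 = i ∧ nab 0 1 p.1 p.2 = j ∧
      nab 1 0 p.1 p.2 = k ∧ nab 1 1 p.1 p.2 = l with hPdef
  set SA : Finset ((Fin n → ZMod 2) × (Fin n → ZMod 2)) := Finset.univ.filter P with hSA
  set SN : Fin n → Fin n → Finset ((Fin n → ZMod 2) × (Fin n → ZMod 2)) := fun a b =>
    SA.filter (fun p => p.1 a = 0 ∧ p.2 a = 1 ∧ p.1 b = 1 ∧ p.2 b = 0) with hSN
  -- identify A and N' with finset cards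
  have hA' : A = SA.card := by
    rw [hA]
    have : {p : (Fin n → ZMod 2) × (Fin n → ZMod 2) | p.1 ∈ C ∧ p.2 ∈ C ∧
        nab 0 0 p.1 p.2 = i ∧ nab 0 1 p.1 p.2 = j ∧
        nab 1 0 p.1 p.2 = k ∧ nab 1 1 p.1 p.2 = l} = ↑SA := by
      ext p; simp [hSA, hPdef]
    rw [this, Set.ncard_coe_finset]
  have hN'2 : N' = (SN h₁ h₂).card := by
    rw [hN']
    have : {p : (Fin n → ZMod 2) × (Fin n → ZMod 2) | p.1 ∈ C ∧ p.2 ∈ C ∧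
        nab 0 0 p.1 p.2 = i ∧ nab 0 1 p.1 p.2 = j ∧
        nab 1 0 p.1 p.2 = k ∧ nab 1 1 p.1 p.2 = l ∧
        p.1 h₁ = 0 ∧ p.2 h₁ = 1 ∧ p.1 h₂ = 1 ∧ p.2 h₂ = 0} = ↑(SN h₁ h₂) := by
      ext p; simp [hSN, hSA, hPdef]; tauto
    rw [this, Set.ncard_coe_finset]
  -- invariance of N' under 2-transitive group
  have hinv : ∀ a b : Fin n, a ≠ b → (SN a b).card = (SN h₁ h₂).card := by
    intro a b hab
    obtain ⟨σ, hσC, hσ1, hσ2⟩ := h2trans h₁ h₂ a b hne hab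
    refine Finset.card_equiv
      (Equiv.prodCongr (Equiv.arrowCongr σ.symm (Equiv.refl (ZMod 2)))
        (Equiv.arrowCongr σ.symm (Equiv.refl (ZMod 2)))) ?_
    rintro ⟨u, v⟩
    simp only [hSN, hSA, hPdef, Finset.mem_filter, Finset.mem_univ, true_and,
      Equiv.prodCongr_apply, Prod.map, Equiv.arrowCongr_apply, Equiv.symm_symm,
      Equiv.coe_refl, Function.comp_def, id_eq]
    have e0 : ∀ w : Fin n → ZMod 2,
        ((σ.symm).arrowCongr (Equiv.refl (ZMod 2))) w = fun x => w (σ x) := by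
      intro w; ext x; simp
    rw [e0 u, e0 v]
    have e1 : ∀ w : Fin n → ZMod 2, ((fun x => w (σ x)) ∈ C) ↔ (w ∈ C) := by
      intro w
      have := (hσC w).symm
      simpa [Function.comp_def] using this
    have e2 : ∀ c d : ZMod 2, ∀ w z : Fin n → ZMod 2,
        nab c d (fun x => w (σ x)) (fun x => z (σ x)) = nab c d w z := by
      intro c d w z
      have := nab_comp c d w z σ
      simpa [Function.comp_def] using this
    rw [e1 u, e1 v, e2, e2, e2, e2, hσ1, hσ2]
  -- double counting
  have key : ∑ x ∈ Finset.univ.offDiag, (SN x.1 x.2).card = SA.card * (j * k) := by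
    have hcount : ∀ p ∈ SA,
        (Finset.univ.offDiag.filter
          (fun x : Fin n × Fin n => p.1 x.1 = 0 ∧ p.2 x.1 = 1 ∧ p.1 x.2 = 1 ∧ p.2 x.2 = 0)).card
          = j * k := by
      intro p hp
      simp only [hSA, Finset.mem_filter, hPdef] at hp
      obtain ⟨-, -, -, -, hj, hk, -⟩ := hp
      have hset : Finset.univ.offDiag.filter
          (fun x : Fin n × Fin n => p.1 x.1 = 0 ∧ p.2 x.1 = 1 ∧ p.1 x.2 = 1 ∧ p.2 x.2 = 0)
          = (Finset.univ.filter fun h => p.1 h = 0 ∧ p.2 h = 1) ×ˢ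
            (Finset.univ.filter fun h => p.1 h = 1 ∧ p.2 h = 0) := by
        ext ⟨a, b⟩
        simp only [Finset.mem_filter, Finset.mem_offDiag, Finset.mem_univ, true_and,
          Finset.mem_product]
        constructor
        · rintro ⟨-, h0, h1, h2, h3⟩; exact ⟨⟨h0, h1⟩, h2, h3⟩
        · rintro ⟨⟨h0, h1⟩, h2, h3⟩
          refine ⟨fun hh => ?_, h0, h1, h2, h3⟩
          rw [hh, h2] at h0
          exact one_ne_zero h0
      rw [hset, Finset.card_product]
      rw [show (Finset.univ.filter fun h => p.1 h = 0 ∧ p.2 h = 1).card = j from hj,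
        show (Finset.univ.filter fun h => p.1 h = 1 ∧ p.2 h = 0).card = k from hk]
    calc ∑ x ∈ Finset.univ.offDiag, (SN x.1 x.2).card
        = ∑ x ∈ Finset.univ.offDiag, ∑ p ∈ SA,
            (if p.1 x.1 = 0 ∧ p.2 x.1 = 1 ∧ p.1 x.2 = 1 ∧ p.2 x.2 = 0 then 1 else 0) := by
          refine Finset.sum_congr rfl fun x _ => ?_
          simp only [hSN]
          rw [Finset.card_filter]
      _ = ∑ p ∈ SA, ∑ x ∈ Finset.univ.offDiag,
            (if p.1 x.1 = 0 ∧ p.2 x.1 = 1 ∧ p.1 x.2 = 1 ∧ p.2 x.2 = 0 then 1 else 0) :=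
          Finset.sum_comm
      _ = ∑ p ∈ SA, (j * k) := by
          refine Finset.sum_congr rfl fun p hp => ?_
          rw [← hcount p hp, Finset.card_filter]
      _ = SA.card * (j * k) := by rw [Finset.sum_const, smul_eq_mul]
  have hconst : ∑ x ∈ Finset.univ.offDiag, (SN x.1 x.2).card
      = ((Finset.univ (α := Fin n)).offDiag.card) * (SN h₁ h₂).card := by
    have h1 : ∑ x ∈ Finset.univ.offDiag, (SN x.1 x.2).card
        = ∑ _x ∈ Finset.univ.offDiag, (SN h₁ h₂).card :=
      Finset.sum_congr rfl fun x hx => hinv x.1 x.2 (Finset.mem_offDiag.mp hx).2.2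
    rw [h1, Finset.sum_const, smul_eq_mul]
  have hod : ((Finset.univ (α := Fin n)).offDiag.card : ℕ) = n * (n - 1) := by
    rw [Finset.offDiag_card, Finset.card_univ, Fintype.card_fin]
    cases n with
    | zero => simp
    | succ m => rw [Nat.succ_sub_one, Nat.mul_succ, Nat.add_sub_cancel]
  rw [hA', hN'2, ← hod, ← hconst, key, mul_comm]
end
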